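/- Let A be an n×n real matrix, B an n×1 column vector (single input), and K a 1×n row vector. Define the controllability matrices C(A,B) with columns B, AB, A²B, …, A^{n-1}B and C(A−BK,B) with columns B, (A−BK)B, …, (A−BK)^{n-1}B. Then det(C(A−BK,B)) = det(C(A,B)). -/

import Mathlib

open Matrix

/-- Controllability matrix of the pair `(M, B)`: the `j`-th column is `M ^ j *ᵥ B`. -/
def ctrbMatrix {n : ℕ} (M : Matrix (Fin n) (Fin n) ℝ) (B : Fin n → ℝ) :
    Matrix (Fin n) (Fin n) ℝ :=
  Matrix.of fun i j => ((M ^ (j : ℕ)) *ᵥ B) i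

lemma vecMulVec_mulVec' {n : ℕ} (B K v : Fin n → ℝ) :
    (Matrix.vecMulVec B K) *ᵥ v = (K ⬝ᵥ v) • B := by
  funext i
  simp [Matrix.vecMulVec, Matrix.mulVec, dotProduct, Finset.mul_sum, mul_assoc,
    mul_comm, mul_left_comm]

lemma mulVec_sum' {n : ℕ} (A : Matrix (Fin n) (Fin n) ℝ) (s : Finset ℕ) (f : ℕ → Fin n → ℝ) :
    A *ᵥ (∑ i ∈ s, f i) = ∑ i ∈ s, A *ᵥ f i := by
  show A.mulVecLin _ = _
  rw [map_sum]
  rfl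

lemma key_expansion {n : ℕ} (A : Matrix (Fin n) (Fin n) ℝ) (B K : Fin n → ℝ) (j : ℕ) :
    ((A - Matrix.vecMulVec B K) ^ j) *ᵥ B =
      (A ^ j) *ᵥ B - ∑ i ∈ Finset.range j,
        (K ⬝ᵥ (((A - Matrix.vecMulVec B K) ^ i) *ᵥ B)) • ((A ^ (j - 1 - i)) *ᵥ B) := by
  induction j with
  | zero => simp
  | succ j ih =>
    set M := A - Matrix.vecMulVec B K with hM
    have h1 : (M ^ (j + 1)) *ᵥ B = M *ᵥ ((M ^ j) *ᵥ B) := by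
      rw [pow_succ', Matrix.mulVec_mulVec]
    rw [h1, ih]
    have h2 : M *ᵥ ((A ^ j) *ᵥ B - ∑ i ∈ Finset.range j,
        (K ⬝ᵥ ((M ^ i) *ᵥ B)) • ((A ^ (j - 1 - i)) *ᵥ B)) =
        A *ᵥ ((A ^ j) *ᵥ B - ∑ i ∈ Finset.range j,
        (K ⬝ᵥ ((M ^ i) *ᵥ B)) • ((A ^ (j - 1 - i)) *ᵥ B))
        - (K ⬝ᵥ ((M ^ j) *ᵥ B)) • B := by
      rw [hM, Matrix.sub_mulVec, vecMulVec_mulVec']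
      congr 1
      rw [← ih]
    rw [h2, Finset.sum_range_succ, Matrix.mulVec_sub, mulVec_sum']
    have h3 : ∀ i ∈ Finset.range j,
        A *ᵥ ((K ⬝ᵥ ((M ^ i) *ᵥ B)) • ((A ^ (j - 1 - i)) *ᵥ B))
        = (K ⬝ᵥ ((M ^ i) *ᵥ B)) • ((A ^ (j + 1 - 1 - i)) *ᵥ B) := by
      intro i hi
      rw [Finset.mem_range] at hi
      rw [Matrix.mulVec_smul, Matrix.mulVec_mulVec, ← pow_succ']
      have : j - 1 - i + 1 = j + 1 - 1 - i := by omega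
      rw [this]
    rw [Finset.sum_congr rfl h3, Matrix.mulVec_mulVec, ← pow_succ']
    have h4 : j + 1 - 1 - j = 0 := by omega
    rw [h4, pow_zero, Matrix.one_mulVec, sub_sub]

theorem det_ctrb_feedback_invariant (n : ℕ) (hn : 1 ≤ n)
    (A : Matrix (Fin n) (Fin n) ℝ) (B K : Fin n → ℝ) :
    (ctrbMatrix (A - Matrix.vecMulVec B K) B).det = (ctrbMatrix A B).det := by
  set M := A - Matrix.vecMulVec B K with hM
  set u : ℕ → ℝ := fun i => K ⬝ᵥ ((M ^ i) *ᵥ B) with hu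
  set T : Matrix (Fin n) (Fin n) ℝ :=
    Matrix.of fun k j => if k = j then 1 else if (k : ℕ) < (j : ℕ) then -(u ((j : ℕ) - 1 - k)) else 0
    with hT
  have hfact : ctrbMatrix M B = ctrbMatrix A B * T := by
    funext i j
    rw [Matrix.mul_apply]
    have hTsplit : ∀ k : Fin n, ctrbMatrix A B i k * T k j =
        (if k = j then ctrbMatrix A B i k else 0)
        + (if (k : ℕ) < (j : ℕ) then -(u ((j : ℕ) - 1 - k)) * ((A ^ (k : ℕ)) *ᵥ B) i else 0) := by
      intro k
      show ctrbMatrix A B i k * (if k = j then (1:ℝ) else if (k : ℕ) < (j : ℕ)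
        then -(u ((j : ℕ) - 1 - k)) else 0) = _
      by_cases h : k = j
      · subst h
        rw [if_pos rfl, if_pos rfl, mul_one, if_neg (lt_irrefl _), add_zero]
      · rw [if_neg h, if_neg h, zero_add]
        by_cases h2 : (k : ℕ) < (j : ℕ)
        · rw [if_pos h2, if_pos h2, mul_comm]
          rfl
        · rw [if_neg h2, if_neg h2, mul_zero]
    rw [Finset.sum_congr rfl (fun k _ => hTsplit k), Finset.sum_add_distrib,
      Finset.sum_ite_eq' Finset.univ j (fun k => ctrbMatrix A B i k)]
    simp only [Finset.mem_univ, if_true]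
    have hsum : (∑ k : Fin n, if (k : ℕ) < (j : ℕ) then
        -(u ((j : ℕ) - 1 - k)) * ((A ^ (k : ℕ)) *ᵥ B) i else 0)
        = -∑ m ∈ Finset.range (j : ℕ), u ((j : ℕ) - 1 - m) * ((A ^ m) *ᵥ B) i := by
      rw [Fin.sum_univ_eq_sum_range (fun m => if m < (j : ℕ) then
        -(u ((j : ℕ) - 1 - m)) * ((A ^ m) *ᵥ B) i else 0)]
      rw [← Finset.sum_neg_distrib]
      rw [← Finset.sum_subset (Finset.range_subset_range.2 j.isLt.le)]
      · exact Finset.sum_congr rfl fun m hm => by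
          rw [Finset.mem_range] at hm; simp [hm]
      · intro m _ hm
        rw [Finset.mem_range] at hm
        simp [hm]
    rw [hsum]
    have hre : ∑ m ∈ Finset.range (j : ℕ), u ((j : ℕ) - 1 - m) * ((A ^ m) *ᵥ B) i
        = ∑ m ∈ Finset.range (j : ℕ), u m * ((A ^ ((j : ℕ) - 1 - m)) *ᵥ B) i := by
      rw [← Finset.sum_range_reflect]
      refine Finset.sum_congr rfl fun m hm => ?_
      rw [Finset.mem_range] at hm
      congr 2 <;> omega
    rw [hre]
    show ((M ^ (j : ℕ)) *ᵥ B) i = ((A ^ (j : ℕ)) *ᵥ B) i + _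
    rw [hM, key_expansion A B K (j : ℕ), ← hM]
    rw [Pi.sub_apply, Finset.sum_apply, sub_eq_add_neg]
    simp only [Pi.smul_apply, smul_eq_mul]
    rfl
  have hTtri : T.BlockTriangular id := by
    intro i j hij
    have h1 : i ≠ j := fun h => by simp [h] at hij
    have h2 : ¬ (i : ℕ) < (j : ℕ) := by
      have : (j : ℕ) < (i : ℕ) := hij
      omega
    show (if i = j then (1:ℝ) else if (i : ℕ) < (j : ℕ) then _ else 0) = 0
    rw [if_neg h1, if_neg h2]
  have hdetT : T.det = 1 := by
    rw [Matrix.det_of_upperTriangular hTtri]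
    have : ∀ i : Fin n, T i i = 1 := fun i => by
      show (if i = i then (1:ℝ) else _) = 1
      rw [if_pos rfl]
    simp [this]
  rw [hfact, Matrix.det_mul, hdetT, mul_one]
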